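/- Let T₁, …, Tₙ be i.i.d. real-valued random variables with common law μ, independent of a real-valued random variable t. Define the Monte Carlo p-value pₙ = (1 + Σ_{i=1}^n 1{Tᵢ ≥ t})/(n+1). If t has law μ as well (i.e., under the null hypothesis) and μ is atomless, then for every α ∈ (0,1), P(pₙ ≤ α) ≤ α; that is, pₙ is a valid p-value. -/

import Mathlib

open MeasureTheory ProbabilityTheory Finset
open scoped Classical ENNReal NNReal

namespace MonteCarloAux

/-- number of indices `i ≠ j` with `x j ≤ x i` -/
noncomputable def c (n : ℕ) (j : Fin (n+1)) (x : Fin (n+1) → ℝ) : ℕ :=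
  (univ.filter (fun i => i ≠ j ∧ x j ≤ x i)).card

/-- the rejection event seen on the canonical product space -/
noncomputable def A (n : ℕ) (α : ℝ) (j : Fin (n+1)) : Set (Fin (n+1) → ℝ) :=
  {x | (1 + (c n j x : ℝ)) / (n+1) ≤ α}

lemma c_cast (n : ℕ) (j : Fin (n+1)) (x : Fin (n+1) → ℝ) :
    (c n j x : ℝ) = ∑ i : Fin (n+1), if i ≠ j ∧ x j ≤ x i then (1:ℝ) else 0 := by
  rw [c, Finset.card_filter, Nat.cast_sum]
  exact Finset.sum_congr rfl fun i _ => by split_ifs <;> simp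

lemma measurable_c (n : ℕ) (j : Fin (n+1)) :
    Measurable fun x : Fin (n+1) → ℝ => (c n j x : ℝ) := by
  simp only [c_cast]
  refine Finset.measurable_sum _ fun i _ => Measurable.ite ?_ measurable_const measurable_const
  by_cases hij : i = j
  · simp [hij]
  · have : {x : Fin (n+1) → ℝ | i ≠ j ∧ x j ≤ x i} = {x | x j ≤ x i} := by
      ext x; simp [hij]
    rw [this]
    exact measurableSet_le (measurable_pi_apply j) (measurable_pi_apply i)

lemma measurableSet_A (n : ℕ) (α : ℝ) (j : Fin (n+1)) : MeasurableSet (A n α j) := by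
  have : A n α j = (fun x => (1 + (c n j x : ℝ)) / (n+1)) ⁻¹' Set.Iic α := rfl
  rw [this]
  exact ((measurable_const.add (measurable_c n j)).div_const _) measurableSet_Iic

lemma c_lt (n : ℕ) {j k : Fin (n+1)} {x : Fin (n+1) → ℝ} (h : x j < x k) :
    c n k x < c n j x := by
  have hkj : k ≠ j := fun hk => absurd h (by simp [hk])
  have hk : k ∉ univ.filter (fun i => i ≠ k ∧ x k ≤ x i) := by simp
  have hsub : insert k (univ.filter (fun i => i ≠ k ∧ x k ≤ x i)) ⊆
      univ.filter (fun i => i ≠ j ∧ x j ≤ x i) := by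
    intro i hi
    rcases Finset.mem_insert.1 hi with rfl | hi
    · exact Finset.mem_filter.2 ⟨Finset.mem_univ _, hkj, h.le⟩
    · obtain ⟨-, hik, hxk⟩ := Finset.mem_filter.1 hi
      refine Finset.mem_filter.2 ⟨Finset.mem_univ _, ?_, (h.le.trans hxk)⟩
      rintro rfl
      exact absurd (h.trans_le hxk) (lt_irrefl _)
  calc c n k x < (insert k (univ.filter (fun i => i ≠ k ∧ x k ≤ x i))).card := by
        rw [Finset.card_insert_of_notMem hk]; exact Nat.lt_succ_self _
    _ ≤ c n j x := Finset.card_le_card hsub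

lemma c_inj (n : ℕ) {x : Fin (n+1) → ℝ} (hx : Function.Injective x) :
    Function.Injective (fun j => c n j x) := by
  intro j k h
  by_contra hne
  have hxne : x j ≠ x k := fun he => hne (hx he)
  rcases hxne.lt_or_gt with h1 | h1
  · exact absurd h (c_lt n h1).ne'
  · exact absurd h (c_lt n h1).ne

lemma count_le (n : ℕ) {α : ℝ} (hα0 : 0 < α) {x : Fin (n+1) → ℝ}
    (hx : Function.Injective x) :
    ((univ.filter fun j => x ∈ A n α j).card : ℝ) ≤ α * (n+1) := by
  have hn1 : (0:ℝ) < n + 1 := by positivity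
  have h1 : ∀ j ∈ univ.filter (fun j => x ∈ A n α j),
      (fun j => c n j x) j ∈ Finset.range (Nat.floor (α * (n+1))) := by
    intro j hj
    have hj' : (1 + (c n j x : ℝ)) / (n+1) ≤ α := (Finset.mem_filter.1 hj).2
    rw [div_le_iff₀ hn1] at hj'
    have : ((c n j x + 1 : ℕ) : ℝ) ≤ α * (n+1) := by push_cast; linarith
    exact Finset.mem_range.2 (Nat.le_floor this)
  have h2 : (univ.filter fun j => x ∈ A n α j).card ≤ Nat.floor (α * (n+1)) := by
    have := Finset.card_le_card_of_injOn (fun j => c n j x) h1 ((c_inj n hx).injOn)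
    simpa using this
  calc ((univ.filter fun j => x ∈ A n α j).card : ℝ)
      ≤ (Nat.floor (α * (n+1)) : ℝ) := by exact_mod_cast h2
    _ ≤ α * (n+1) := Nat.floor_le (by positivity)

lemma c_perm (n : ℕ) (e : Equiv.Perm (Fin (n+1))) (j : Fin (n+1)) (x : Fin (n+1) → ℝ)
    (hj : e 0 = j) : c n 0 (fun i => x (e i)) = c n j x := by
  unfold c
  apply Finset.card_equiv e
  intro i
  simp only [Finset.mem_filter, Finset.mem_univ, true_and]
  constructor
  · rintro ⟨hi0, hle⟩
    refine ⟨fun h => hi0 ?_, by rwa [hj] at hle⟩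
    apply e.injective; rw [hj, h]
  · rintro ⟨hij, hle⟩
    refine ⟨fun h => hij ?_, by rwa [← hj] at hle⟩
    rw [h, hj]

lemma pair_null {n : ℕ} (μ : Measure ℝ) [IsProbabilityMeasure μ] [NullSingletonClass μ]
    (i j : Fin (n+1)) (hij : i ≠ j) :
    Measure.pi (fun _ : Fin (n+1) => μ) {x | x i = x j} = 0 := by
  set π := Measure.pi (fun _ : Fin (n+1) => μ)
  have hm : Measurable fun x : Fin (n+1) → ℝ => (x i, x j) :=
    (measurable_pi_apply i).prodMk (measurable_pi_apply j)
  have hD : MeasurableSet {p : ℝ × ℝ | p.1 = p.2} :=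
    measurableSet_eq_fun measurable_fst measurable_snd
  have hmap2 : Measure.map (fun x => (x i, x j)) π = μ.prod μ := by
    refine (Measure.prod_eq fun s t hs ht => ?_).symm
    rw [Measure.map_apply hm (hs.prod ht)]
    have hpre : (fun x : Fin (n+1) → ℝ => (x i, x j)) ⁻¹' (s ×ˢ t) =
        Set.pi Set.univ (fun k => if k = i then s else if k = j then t else Set.univ) := by
      ext x
      simp only [Set.mem_preimage, Set.mem_prod, Set.mem_pi, Set.mem_univ, true_implies]
      constructor
      · rintro ⟨h1, h2⟩ k
        split_ifs with h h'
        · rwa [h]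
        · rwa [h']
        · trivial
      · intro h
        constructor
        · have := h i; simpa using this
        · have := h j; simp only [if_neg hij.symm, if_pos rfl] at this; exact this
    rw [hpre, Measure.pi_pi]
    rw [← Finset.mul_prod_erase univ _ (Finset.mem_univ i), if_pos rfl]
    rw [← Finset.mul_prod_erase (univ.erase i) _
      (Finset.mem_erase.2 ⟨hij.symm, Finset.mem_univ j⟩), if_neg hij.symm, if_pos rfl]
    rw [Finset.prod_eq_one, mul_one]
    intro k hk
    have h1 := Finset.mem_erase.1 hk
    have h2 := Finset.mem_erase.1 h1.2
    rw [if_neg h2.1, if_neg h1.1, measure_univ]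
  have hkey : π {x | x i = x j} = (μ.prod μ) {p : ℝ × ℝ | p.1 = p.2} := by
    rw [← hmap2, Measure.map_apply hm hD]
    rfl
  rw [hkey, Measure.prod_apply hD]
  have hz : ∀ a : ℝ, μ (Prod.mk a ⁻¹' {p : ℝ × ℝ | p.1 = p.2}) = 0 := by
    intro a
    have : Prod.mk a ⁻¹' {p : ℝ × ℝ | p.1 = p.2} = {a} := by
      ext b; simp [eq_comm]
    rw [this]; exact measure_singleton a
  simp [hz]

lemma ae_inj {n : ℕ} (μ : Measure ℝ) [IsProbabilityMeasure μ] [NullSingletonClass μ] :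
    ∀ᵐ x ∂(Measure.pi (fun _ : Fin (n+1) => μ)), Function.Injective x := by
  have hsub : {x : Fin (n+1) → ℝ | ¬ Function.Injective x} ⊆
      ⋃ (i : Fin (n+1)) (j : Fin (n+1)) (_ : i ≠ j), {x | x i = x j} := by
    intro x hx
    simp only [Set.mem_setOf_eq, Function.Injective] at hx
    push_neg at hx
    obtain ⟨i, j, hxe, hij⟩ := hx
    exact Set.mem_iUnion.2 ⟨i, Set.mem_iUnion.2 ⟨j, Set.mem_iUnion.2 ⟨hij, hxe⟩⟩⟩
  refine measure_mono_null hsub ?_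
  exact measure_iUnion_null fun i => measure_iUnion_null fun j =>
    measure_iUnion_null fun hij => pair_null μ i j hij

end MonteCarloAux

open MonteCarloAux

/-- Validity of the Monte Carlo p-value: if `X 0` (the observed statistic `t`) and
`X 1, …, X n` (the simulated statistics `T₁, …, Tₙ`) are i.i.d. with common atomless
law `μ`, then the Monte Carlo p-value `pₙ = (1 + #{i : Tᵢ ≥ t})/(n+1)` satisfies
`P(pₙ ≤ α) ≤ α` for every `α ∈ (0,1)`. -/
theorem monteCarlo_pvalue_valid {Ω : Type*} [MeasurableSpace Ω]
    (P : Measure Ω) [IsProbabilityMeasure P]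
    (n : ℕ) (X : Fin (n+1) → Ω → ℝ) (hmeas : ∀ i, Measurable (X i))
    (hindep : iIndepFun X P)
    (μ : Measure ℝ) [IsProbabilityMeasure μ] [NullSingletonClass μ]
    (hlaw : ∀ i, Measure.map (X i) P = μ)
    (α : ℝ) (hα : α ∈ Set.Ioo (0:ℝ) 1) :
    P {ω | (1 + ((Finset.univ.filter
          (fun i : Fin n => X 0 ω ≤ X i.succ ω)).card : ℝ)) / (n+1) ≤ α}
      ≤ ENNReal.ofReal α := by
  obtain ⟨hα0, hα1⟩ := hα
  set π := Measure.pi (fun _ : Fin (n+1) => μ) with hπdef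
  have hA : ∀ j, MeasurableSet (A n α j) := measurableSet_A n α
  have hY : Measurable (fun ω i => X i ω) := measurable_pi_lambda _ hmeas
  -- Step 1: the joint law is the product measure
  have hmap : π = Measure.map (fun ω i => X i ω) P := by
    refine Measure.pi_eq fun s hs => ?_
    rw [Measure.map_apply hY (MeasurableSet.univ_pi hs)]
    have hpre : (fun ω i => X i ω) ⁻¹' Set.pi Set.univ s = ⋂ i ∈ univ, X i ⁻¹' s i := by
      ext ω; simp [Set.mem_pi]
    rw [hpre, hindep.measure_inter_preimage_eq_mul univ (fun i _ => hs i)]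
    exact Finset.prod_congr rfl fun i _ => by
      rw [← hlaw i, Measure.map_apply (hmeas i) (hs i)]
  -- Step 2: the event equals the pullback of `A n α 0`
  have hcard : ∀ x : Fin (n+1) → ℝ,
      ((univ.filter fun i : Fin n => x 0 ≤ x i.succ).card) = c n 0 x := by
    intro x
    rw [c, Finset.card_filter, Finset.card_filter, Fin.sum_univ_succ]
    simp [Fin.succ_ne_zero]
  have hevent : {ω | (1 + ((Finset.univ.filter
        (fun i : Fin n => X 0 ω ≤ X i.succ ω)).card : ℝ)) / (n+1) ≤ α}
      = (fun ω i => X i ω) ⁻¹' A n α 0 := by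
    ext ω
    simp only [Set.mem_setOf_eq, Set.mem_preimage, A]
    rw [hcard (fun i => X i ω)]
  rw [hevent, ← Measure.map_apply hY (hA 0), ← hmap]
  -- Step 3: symmetry gives `π (A j) = π (A 0)` for all `j`
  have hperm : ∀ j, π (A n α j) = π (A n α 0) := by
    intro j
    set e : Equiv.Perm (Fin (n+1)) := Equiv.swap 0 j with he
    have hmp : MeasurePreserving (MeasurableEquiv.piCongrLeft (fun _ : Fin (n+1) => ℝ) e) π π :=
      measurePreserving_piCongrLeft (fun _ : Fin (n+1) => μ) e
    have hTx : ∀ x : Fin (n+1) → ℝ,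
        (MeasurableEquiv.piCongrLeft (fun _ : Fin (n+1) => ℝ) e) x = fun i => x (e i) := by
      intro x
      funext i
      have h1 := MeasurableEquiv.piCongrLeft_apply_apply (β := fun _ : Fin (n+1) => ℝ) e x (e i)
      rwa [Equiv.swap_apply_self] at h1
    have hTpre : (MeasurableEquiv.piCongrLeft (fun _ : Fin (n+1) => ℝ) e) ⁻¹' (A n α 0)
        = A n α j := by
      ext x
      simp only [Set.mem_preimage, A, Set.mem_setOf_eq, hTx x]
      rw [c_perm n e j x (Equiv.swap_apply_left 0 j)]
    rw [← hTpre]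
    exact hmp.measure_preimage (hA 0).nullMeasurableSet
  -- Step 4: integrate the pointwise count bound
  have hsum : ∑ j : Fin (n+1), π (A n α j) ≤ ENNReal.ofReal (α * (n+1)) := by
    calc (∑ j : Fin (n+1), π (A n α j))
        = ∑ j : Fin (n+1), ∫⁻ x, (A n α j).indicator (fun _ => (1:ℝ≥0∞)) x ∂π :=
          Finset.sum_congr rfl fun j _ => (lintegral_indicator_one (hA j)).symm
      _ = ∫⁻ x, ∑ j : Fin (n+1), (A n α j).indicator (fun _ => (1:ℝ≥0∞)) x ∂π :=
          (lintegral_finset_sum _ fun j _ => measurable_const.indicator (hA j)).symm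
      _ ≤ ∫⁻ _x, ENNReal.ofReal (α * (n+1)) ∂π := by
          refine lintegral_mono_ae ?_
          filter_upwards [ae_inj μ] with x hx
          have hcount := count_le n hα0 hx
          have hsum' : ∑ j : Fin (n+1), (A n α j).indicator (fun _ => (1:ℝ≥0∞)) x
              = ((univ.filter fun j => x ∈ A n α j).card : ℝ≥0∞) := by
            rw [Finset.card_filter, Nat.cast_sum]
            refine Finset.sum_congr rfl fun j _ => ?_
            by_cases h : x ∈ A n α j <;> simp [h, Set.indicator_apply]
          rw [hsum']
          calc ((univ.filter fun j => x ∈ A n α j).card : ℝ≥0∞)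
              = ENNReal.ofReal (((univ.filter fun j => x ∈ A n α j).card : ℕ) : ℝ) := by
                rw [ENNReal.ofReal_natCast]
            _ ≤ ENNReal.ofReal (α * (n+1)) := ENNReal.ofReal_le_ofReal hcount
      _ = ENNReal.ofReal (α * (n+1)) := by simp
  -- Step 5: conclude
  have htot : ((n:ℝ≥0∞)+1) * π (A n α 0) ≤ ENNReal.ofReal (α * (n+1)) := by
    calc ((n:ℝ≥0∞)+1) * π (A n α 0) = (∑ _j : Fin (n+1), π (A n α 0)) := by
          rw [Finset.sum_const, Finset.card_univ, Fintype.card_fin, nsmul_eq_mul]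
          push_cast
          ring
      _ = ∑ j : Fin (n+1), π (A n α j) := (Finset.sum_congr rfl fun j _ => (hperm j).symm)
      _ ≤ ENNReal.ofReal (α * (n+1)) := hsum
  have hof : ENNReal.ofReal (α * (n+1)) = ((n:ℝ≥0∞)+1) * ENNReal.ofReal α := by
    rw [mul_comm α, ENNReal.ofReal_mul (by positivity)]
    congr 1
    rw [show ((n:ℝ)+1) = ((n+1:ℕ):ℝ) by push_cast; ring, ENNReal.ofReal_natCast]
    push_cast
    ring
  rw [hof] at htot
  have hne0 : ((n:ℝ≥0∞)+1) ≠ 0 := by simp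
  have hnetop : ((n:ℝ≥0∞)+1) ≠ ⊤ := by
    simp [ENNReal.add_ne_top]
  exact (ENNReal.mul_le_mul_iff_right hne0 hnetop).1 htot
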